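/- Let a group G act on a set X with a global cross section Z whose common isotropy subgroup is G_0, and let N = {g ∈ G : gG_0g^{-1} = G_0} be the normalizer of G_0 in G. Then a subset Z' ⊆ X is a global cross section for the action of G on X if and only if there exist g_0 ∈ G and elements n_z ∈ N for each z ∈ Z such that Z' = {g_0 n_z z : z ∈ Z}. -/

import Mathlib

private lemma stab_conj' {G X : Type*} [Group G] [MulAction G X] (g : G) (z : X) (h : G) :
    h ∈ MulAction.stabilizer G (g • z) ↔ g⁻¹ * h * g ∈ MulAction.stabilizer G z := by
  rw [MulAction.mem_stabilizer_iff, MulAction.mem_stabilizer_iff, mul_smul, mul_smul,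
    inv_smul_eq_iff]

/-- let `Z` be a global cross section for the action of `G` on `X` with
common isotropy subgroup `G₀`, and let `N` be the normalizer of `G₀` in `G`. Then a
subset `Z' ⊆ X` is a global cross section iff `Z' = {g₀ * n_z • z : z ∈ Z}` for some
`g₀ ∈ G` and `n_z ∈ N`, `z ∈ Z`. -/
theorem stmt_12 {G X : Type*} [Group G] [MulAction G X]
    (G₀ : Subgroup G) (Z : Set X)
    (hcross : ∀ x : X, ∃! z, z ∈ Z ∧ z ∈ MulAction.orbit G x)
    (hglobal : ∀ z ∈ Z, MulAction.stabilizer G z = G₀)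
    (Z' : Set X) :
    ((∀ x : X, ∃! z, z ∈ Z' ∧ z ∈ MulAction.orbit G x) ∧
      (∀ z₁ ∈ Z', ∀ z₂ ∈ Z',
        MulAction.stabilizer G z₁ = MulAction.stabilizer G z₂)) ↔
    (∃ g₀ : G, ∃ n : X → G, (∀ z ∈ Z, n z ∈ Subgroup.normalizer (G₀ : Set G)) ∧
      Z' = {x : X | ∃ z ∈ Z, x = (g₀ * n z) • z}) := by
  constructor
  · rintro ⟨hc', hs'⟩
    by_cases hX : Nonempty X
    · obtain ⟨x₀⟩ := hX
      obtain ⟨z₀, ⟨hz₀Z, hz₀o⟩, -⟩ := hcross x₀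
      have key : ∀ z ∈ Z, ∃ g : G, (g • z) ∈ Z' := by
        intro z hz
        obtain ⟨z', ⟨hz', ho⟩, -⟩ := hc' z
        obtain ⟨g, hg⟩ := ho
        have hg' : g • z = z' := hg
        exact ⟨g, by rw [hg']; exact hz'⟩
      choose! gf hgf using key
      refine ⟨gf z₀, fun z => (gf z₀)⁻¹ * gf z, ?_, ?_⟩
      · intro z hz
        rw [Subgroup.mem_normalizer_iff]
        intro h
        have e1 : gf z * h * (gf z)⁻¹ ∈ MulAction.stabilizer G (gf z • z) ↔ h ∈ G₀ := by
          rw [stab_conj', hglobal z hz,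
            show (gf z)⁻¹ * (gf z * h * (gf z)⁻¹) * gf z = h from by group]
        have e2 : MulAction.stabilizer G (gf z • z) = MulAction.stabilizer G (gf z₀ • z₀) :=
          hs' _ (hgf z hz) _ (hgf z₀ hz₀Z)
        calc h ∈ G₀
            ↔ gf z * h * (gf z)⁻¹ ∈ MulAction.stabilizer G (gf z • z) := e1.symm
          _ ↔ gf z * h * (gf z)⁻¹ ∈ MulAction.stabilizer G (gf z₀ • z₀) := by rw [e2]
          _ ↔ (gf z₀)⁻¹ * (gf z * h * (gf z)⁻¹) * gf z₀ ∈ G₀ := by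
              rw [stab_conj', hglobal z₀ hz₀Z]
          _ ↔ (gf z₀)⁻¹ * gf z * h * ((gf z₀)⁻¹ * gf z)⁻¹ ∈ G₀ := by
              rw [show (gf z₀)⁻¹ * gf z * h * ((gf z₀)⁻¹ * gf z)⁻¹
                = (gf z₀)⁻¹ * (gf z * h * (gf z)⁻¹) * gf z₀ from by group]
      · ext x
        simp only [Set.mem_setOf_eq, mul_inv_cancel_left]
        constructor
        · intro hx
          obtain ⟨z, ⟨hzZ, hzo⟩, -⟩ := hcross x
          obtain ⟨g, hg⟩ := hzo
          have hg' : g • x = z := hg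
          have h1 : gf z • z ∈ MulAction.orbit G x :=
            ⟨gf z * g, by show (gf z * g) • x = gf z • z; rw [mul_smul, hg']⟩
          obtain ⟨y, -, hyu⟩ := hc' x
          have ha := hyu x ⟨hx, MulAction.mem_orbit_self x⟩
          have hb := hyu (gf z • z) ⟨hgf z hzZ, h1⟩
          exact ⟨z, hzZ, by rw [ha, hb]⟩
        · rintro ⟨z, hzZ, rfl⟩
          exact hgf z hzZ
    · refine ⟨1, fun _ => 1, fun z hz => one_mem _, ?_⟩
      ext x
      exact absurd ⟨x⟩ hX
  · rintro ⟨g₀, n, hn, rfl⟩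
    have stab_eq : ∀ w ∈ Z, ∀ h : G,
        h ∈ MulAction.stabilizer G ((g₀ * n w) • w) ↔ g₀⁻¹ * h * g₀ ∈ G₀ := by
      intro w hw h
      rw [stab_conj', hglobal w hw,
        show (g₀ * n w)⁻¹ * h * (g₀ * n w)
          = (n w)⁻¹ * (g₀⁻¹ * h * g₀) * n w from by group]
      have hNw := Subgroup.mem_normalizer_iff.mp (hn w hw)
      have e2 : n w * ((n w)⁻¹ * (g₀⁻¹ * h * g₀) * n w) * (n w)⁻¹ = g₀⁻¹ * h * g₀ := by
        group
      rw [show (g₀⁻¹ * h * g₀ ∈ G₀) = (n w * ((n w)⁻¹ * (g₀⁻¹ * h * g₀) * n w) * (n w)⁻¹ ∈ G₀)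
        from by rw [e2]]
      exact hNw _
    constructor
    · intro x
      obtain ⟨z, ⟨hzZ, hzo⟩, huniq⟩ := hcross x
      obtain ⟨g, hg⟩ := hzo
      have hg' : g • x = z := hg
      refine ⟨(g₀ * n z) • z, ⟨⟨z, hzZ, rfl⟩,
        ⟨g₀ * n z * g, by show (g₀ * n z * g) • x = (g₀ * n z) • z; rw [mul_smul, hg']⟩⟩, ?_⟩
      rintro y ⟨⟨w, hwZ, rfl⟩, hyo⟩
      have hwo : w ∈ MulAction.orbit G x := by
        obtain ⟨k, hk⟩ := hyo
        have hk' : k • x = (g₀ * n w) • w := hk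
        exact ⟨(g₀ * n w)⁻¹ * k, by
          show ((g₀ * n w)⁻¹ * k) • x = w
          rw [mul_smul, hk', inv_smul_smul]⟩
      rw [huniq w ⟨hwZ, hwo⟩]
    · rintro z₁ ⟨w₁, hw₁, rfl⟩ z₂ ⟨w₂, hw₂, rfl⟩
      ext h
      rw [stab_eq w₁ hw₁, stab_eq w₂ hw₂]
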